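/- Let ε > 0 satisfy (1 - 4ε²)² = 2ε and let Δ = (1 + 4ε²)² + 8(1 + 4ε). Then n₁(ε) - √Δ · n₂(ε) < 0, where n₁(χ) = 5 + 14χ - 8χ³ - 16χ⁴ and n₂(χ) = 1 + 2χ + 28χ² + 64χ³. -/
import Mathlib


/-- At the bifurcation point (`ε > 0` with `(1-4ε²)² = 2ε`), with
`Δ = (1+4ε²)² + 8(1+4ε)`, one has `n₁(ε) - √Δ · n₂(ε) < 0` where
`n₁(χ) = 5 + 14χ - 8χ³ - 16χ⁴` and `n₂(χ) = 1 + 2χ + 28χ² + 64χ³`. -/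
theorem stmt_5 (ε : ℝ) (hε : 0 < ε) (hbif : (1 - 4 * ε ^ 2) ^ 2 = 2 * ε) :
    (5 + 14 * ε - 8 * ε ^ 3 - 16 * ε ^ 4) -
      Real.sqrt ((1 + 4 * ε ^ 2) ^ 2 + 8 * (1 + 4 * ε)) *
        (1 + 2 * ε + 28 * ε ^ 2 + 64 * ε ^ 3) < 0 := by
  have hq : ε > 1/4 := by nlinarith [sq_nonneg (1 - 4 * ε ^ 2), sq_nonneg ε, sq_nonneg (ε - 1/4)]
  have hΔ : (16:ℝ) < (1 + 4 * ε ^ 2) ^ 2 + 8 * (1 + 4 * ε) := by nlinarith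
  have h4 : (4:ℝ) < Real.sqrt ((1 + 4 * ε ^ 2) ^ 2 + 8 * (1 + 4 * ε)) := by
    calc (4:ℝ) = Real.sqrt 16 := by
          rw [show (16:ℝ) = 4^2 by norm_num, Real.sqrt_sq (by norm_num)]
      _ < _ := Real.sqrt_lt_sqrt (by norm_num) hΔ
  have hn2 : (0:ℝ) < 1 + 2 * ε + 28 * ε ^ 2 + 64 * ε ^ 3 := by positivity
  nlinarith [mul_lt_mul_of_pos_right h4 hn2]
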